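/- Let X be a normed space and h : X → ℝ ∪ {∞} convex. If for some δ : (0,∞) → (0,∞) and convex set C one has δ(ε) ≤ ½h(x) + ½h(y) − h((x+y)/2) whenever x, y ∈ C ∩ dom h and ‖x − y‖ ≥ ε, then h((1−t)x + ty) ≤ (1−t)h(x) + t h(y) − 2 t(1−t) δ(ε) for all t ∈ [0,1] and x, y ∈ C ∩ dom h with ‖x − y‖ ≥ ε. -/

import Mathlib

/-- Midpoint modulus of uniform convexity implies the gauge form with `2 t (1-t) δ(ε)`. -/
theorem stmt_4 {X : Type*} [NormedAddCommGroup X] [NormedSpace ℝ X]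
    (h : X → EReal) (hbot : ∀ x, h x ≠ ⊥)
    (hconv : ∀ x y : X, ∀ t ∈ Set.Icc (0:ℝ) 1,
      h ((1 - t) • x + t • y) ≤ ((1 - t : ℝ) : EReal) * h x + ((t : ℝ) : EReal) * h y)
    (C : Set X) (hC : Convex ℝ C)
    (δ : ℝ → ℝ) (hδpos : ∀ ε > (0:ℝ), 0 < δ ε)
    (ε : ℝ) (hε : 0 < ε)
    (hδ : ∀ x ∈ C, ∀ y ∈ C, h x ≠ ⊤ → h y ≠ ⊤ → ε ≤ ‖x - y‖ →
      ((δ ε : ℝ) : EReal) ≤ ((1/2 : ℝ) : EReal) * h x + ((1/2 : ℝ) : EReal) * h y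
        - h ((1/2 : ℝ) • (x + y))) :
    ∀ t ∈ Set.Icc (0:ℝ) 1, ∀ x ∈ C, ∀ y ∈ C, h x ≠ ⊤ → h y ≠ ⊤ → ε ≤ ‖x - y‖ →
      h ((1 - t) • x + t • y) ≤ ((1 - t : ℝ) : EReal) * h x + ((t : ℝ) : EReal) * h y
        - ((2 * t * (1 - t) * δ ε : ℝ) : EReal) := by
  rintro t ⟨ht0, ht1⟩ x hx y hy hxt hyt hxy
  set m := (1/2 : ℝ) • (x + y) with hm
  set a := (h x).toReal with ha
  have hxa : h x = (a : EReal) := (EReal.coe_toReal hxt (hbot x)).symm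
  set b := (h y).toReal with hb
  have hyb : h y = (b : EReal) := (EReal.coe_toReal hyt (hbot y)).symm
  have hmδ := hδ x hx y hy hxt hyt hxy
  rw [hxa, hyb] at hmδ
  have hmne : h m ≠ ⊤ := by
    intro htop
    rw [htop] at hmδ
    have : ((1/2 : ℝ) : EReal) * (a : EReal) + ((1/2 : ℝ) : EReal) * (b : EReal)
        = ((a/2 + b/2 : ℝ) : EReal) := by norm_cast
    rw [this] at hmδ
    rw [EReal.sub_top] at hmδ
    exact absurd (le_bot_iff.mp hmδ) (EReal.coe_ne_bot _)
  set c := (h m).toReal with hc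
  have hmc : h m = (c : EReal) := (EReal.coe_toReal hmne (hbot m)).symm
  rw [hmc] at hmδ
  have hmR : δ ε ≤ a/2 + b/2 - c := by
    have : ((δ ε : ℝ) : EReal) ≤ ((a/2 + b/2 - c : ℝ) : EReal) := by
      convert hmδ using 1
      norm_cast; ring
    exact_mod_cast this
  have hδε := hδpos ε hε
  rcases le_or_gt t (1/2 : ℝ) with hhalf | hhalf
  · -- t ≤ 1/2
    have hpt : (1 - 2*t) • x + (2*t) • m = (1 - t) • x + t • y := by
      rw [hm]; module
    have hz := hconv x m (2*t) ⟨by linarith, by linarith⟩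
    rw [hpt, hxa, hmc] at hz
    have hzR : h ((1 - t) • x + t • y) ≤ (((1 - 2*t) * a + 2*t * c : ℝ) : EReal) := by
      refine hz.trans_eq ?_
      norm_cast
    refine hzR.trans ?_
    rw [hxa, hyb]
    have : ((1 - t : ℝ) : EReal) * (a : EReal) + ((t : ℝ) : EReal) * (b : EReal)
        - ((2 * t * (1 - t) * δ ε : ℝ) : EReal)
        = (((1 - t) * a + t * b - 2 * t * (1 - t) * δ ε : ℝ) : EReal) := by
      norm_cast
    rw [this, EReal.coe_le_coe_iff]
    nlinarith [mul_nonneg (mul_nonneg ht0 ht0) hδε.le,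
      mul_le_mul_of_nonneg_left hmR (by linarith : (0:ℝ) ≤ 2*t)]
  · -- t > 1/2
    have hpt : (1 - (2*t - 1)) • m + (2*t - 1) • y = (1 - t) • x + t • y := by
      rw [hm]; module
    have hz := hconv m y (2*t - 1) ⟨by linarith, by linarith⟩
    rw [hpt, hmc, hyb] at hz
    have hzR : h ((1 - t) • x + t • y) ≤ (((1 - (2*t - 1)) * c + (2*t - 1) * b : ℝ) : EReal) := by
      refine hz.trans_eq ?_
      norm_cast
    refine hzR.trans ?_
    rw [hxa, hyb]
    have : ((1 - t : ℝ) : EReal) * (a : EReal) + ((t : ℝ) : EReal) * (b : EReal)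
        - ((2 * t * (1 - t) * δ ε : ℝ) : EReal)
        = (((1 - t) * a + t * b - 2 * t * (1 - t) * δ ε : ℝ) : EReal) := by
      norm_cast
    rw [this, EReal.coe_le_coe_iff]
    nlinarith [mul_nonneg (mul_nonneg (by linarith : (0:ℝ) ≤ 1 - t) (by linarith : (0:ℝ) ≤ 1 - t)) hδε.le,
      mul_le_mul_of_nonneg_left hmR (by linarith : (0:ℝ) ≤ 2 - 2*t)]
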